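/- arXiv:2012.13509 — 2 statements merged into one kernel-verified Lean document; each statement's English description precedes it below -/
import Mathlib

section
/- Let n ≥ 1 and C' ∈ (0,1), and let W : (1,∞) → ℝ be differentiable with W(r) ∉ [0,1] for all r > 1, satisfying r·W'(r)·(C'·W(r)^(n-1) − (W(r)−1)^(n-1)) + (C'·W(r)^n − (W(r)−1)^n) = 0 for all r > 1. Then there exists a constant c ∈ ℝ such that C'·W(r)^n − (W(r)−1)^n = c·r^(-n) for all r > 1. -/
/-- first integral for the ODE arising in the case `τ ∈ (0, π/4)`. -/
theorem ode_first_integral_tau_small (n : ℕ) (hn : 1 ≤ n) (C' : ℝ)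
    (hC' : C' ∈ Set.Ioo (0 : ℝ) 1)
    (W W' : ℝ → ℝ)
    (hrange : ∀ r : ℝ, 1 < r → W r < 0 ∨ 1 < W r)
    (hderiv : ∀ r : ℝ, 1 < r → HasDerivAt W (W' r) r)
    (heq : ∀ r : ℝ, 1 < r →
      r * W' r * (C' * (W r) ^ (n - 1) - (W r - 1) ^ (n - 1))
        + (C' * (W r) ^ n - (W r - 1) ^ n) = 0) :
    ∃ c : ℝ, ∀ r : ℝ, 1 < r →
      C' * (W r) ^ n - (W r - 1) ^ n = c * r ^ (-(n : ℤ)) := by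
  obtain ⟨m, rfl⟩ : ∃ m, n = m + 1 := ⟨n - 1, (Nat.succ_pred_eq_of_pos hn).symm⟩
  set F : ℝ → ℝ := fun r => r ^ (m + 1) * (C' * (W r) ^ (m + 1) - (W r - 1) ^ (m + 1)) with hF
  have hFd : ∀ r ∈ Set.Ioi (1 : ℝ), HasDerivWithinAt F 0 (Set.Ioi 1) r := by
    intro r hr
    have hr1 : (1 : ℝ) < r := hr
    have hWd := hderiv r hr1
    have h1 : HasDerivAt (fun r : ℝ => r ^ (m + 1)) ((m + 1 : ℕ) * r ^ m) r := by
      simpa using hasDerivAt_pow (m + 1) r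
    have h2 : HasDerivAt (fun r => C' * (W r) ^ (m + 1) - (W r - 1) ^ (m + 1))
        (C' * ((m + 1 : ℕ) * (W r) ^ m * W' r)
          - (m + 1 : ℕ) * (W r - 1) ^ m * W' r) r := by
      have ha : HasDerivAt (fun r => (W r) ^ (m + 1)) ((m + 1 : ℕ) * (W r) ^ m * W' r) r :=
        hWd.pow (m + 1)
      have hb : HasDerivAt (fun r => (W r - 1) ^ (m + 1))
          ((m + 1 : ℕ) * (W r - 1) ^ m * W' r) r := by
        have := (hWd.sub_const 1).pow (m + 1)
        simp only [Nat.cast_add, Nat.cast_one] at this ⊢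
        exact this
      exact (ha.const_mul C').sub hb
    have h3 := h1.mul h2
    have hkey := heq r hr1
    simp only [Nat.add_sub_cancel] at hkey
    have hrne : r ≠ 0 := by positivity
    have hzero : (m + 1 : ℕ) * r ^ m * (C' * (W r) ^ (m + 1) - (W r - 1) ^ (m + 1))
        + r ^ (m + 1) * (C' * ((m + 1 : ℕ) * (W r) ^ m * W' r)
          - (m + 1 : ℕ) * (W r - 1) ^ m * W' r) = 0 := by
      push_cast
      push_cast at hkey
      linear_combination ((m : ℝ) + 1) * r ^ m * hkey
    have := h3.congr_deriv hzero
    exact this.hasDerivWithinAt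
  have hconst : ∀ x ∈ Set.Ioi (1:ℝ), ∀ y ∈ Set.Ioi (1:ℝ), F x = F y := by
    intro x hx y hy
    have := Convex.norm_image_sub_le_of_norm_hasDerivWithin_le (f := F) (f' := fun _ => 0)
      (C := 0) hFd (fun _ _ => by simp) (convex_Ioi 1) hx hy
    simp only [zero_mul, norm_le_zero_iff, sub_eq_zero] at this
    exact this.symm
  refine ⟨F 2, fun r hr => ?_⟩
  have hrne : r ≠ 0 := by positivity
  have h2 : F 2 = F r := hconst 2 (by norm_num) r hr
  have : C' * (W r) ^ (m + 1) - (W r - 1) ^ (m + 1) = F r / r ^ (m + 1) := by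
    field_simp [hF]
    simp only [hF]; ring
  rw [this, ← h2, zpow_neg, zpow_natCast, div_eq_mul_inv]
end

section
/- Let n ≥ 2, C₀ ∈ ℝ, and let W : (1,∞) → ℝ be differentiable and satisfy arctan(W(r) + r·W'(r)) + (n−1)·arctan(W(r)) = C₀ for all r > 1. Define Θ(w) := C₀ − (n−1)·arctan(w), and assume Θ(W(r)) ∈ (−π/2, π/2) for all r > 1. Then there exists c ∈ ℝ such that (W(r)² + 1)^((n−1)/2) · (W(r)·cos(Θ(W(r))) − sin(Θ(W(r)))) = c·r^(−n) for all r > 1. -/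
open Real

/-- first integral for the special Lagrangian radial ODE. -/
theorem ode_first_integral_SPL (n : ℕ) (hn : 2 ≤ n) (C₀ : ℝ)
    (W W' : ℝ → ℝ)
    (hderiv : ∀ r : ℝ, 1 < r → HasDerivAt W (W' r) r)
    (heq : ∀ r : ℝ, 1 < r →
      Real.arctan (W r + r * W' r) + (n - 1 : ℝ) * Real.arctan (W r) = C₀)
    (Θ : ℝ → ℝ) (hΘ : Θ = fun w : ℝ => C₀ - (n - 1 : ℝ) * Real.arctan w)
    (hrange : ∀ r : ℝ, 1 < r → Θ (W r) ∈ Set.Ioo (-(Real.pi / 2)) (Real.pi / 2)) :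
    ∃ c : ℝ, ∀ r : ℝ, 1 < r →
      ((W r) ^ 2 + 1) ^ (((n : ℝ) - 1) / 2) *
        (W r * Real.cos (Θ (W r)) - Real.sin (Θ (W r))) = c * r ^ (-(n : ℤ)) := by
  set p : ℝ := ((n : ℝ) - 1) / 2 with hp
  set G : ℝ → ℝ := fun r => r ^ n *
      (((W r) ^ 2 + 1) ^ p * (W r * Real.cos (Θ (W r)) - Real.sin (Θ (W r)))) with hGdef
  -- key pointwise fact: sin θ = (W + r W') cos θ
  have hsin : ∀ r : ℝ, 1 < r →
      Real.sin (Θ (W r)) = (W r + r * W' r) * Real.cos (Θ (W r)) := by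
    intro r hr
    have hθ : Θ (W r) = Real.arctan (W r + r * W' r) := by
      have := heq r hr
      simp only [hΘ]
      linarith
    have hcos : Real.cos (Θ (W r)) ≠ 0 := by
      have h := hrange r hr
      exact ne_of_gt (Real.cos_pos_of_mem_Ioo h)
    have htan : Real.tan (Θ (W r)) = W r + r * W' r := by
      rw [hθ, Real.tan_arctan]
    rw [Real.tan_eq_sin_div_cos] at htan
    field_simp at htan
    linarith [htan]
  have hGderiv : ∀ r : ℝ, 1 < r → HasDerivAt G 0 r := by
    intro r hr
    have hW := hderiv r hr
    have hu0 : (W r) ^ 2 + 1 ≠ 0 := by positivity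
    have hu : HasDerivAt (fun x => (W x) ^ 2 + 1) (2 * W r * W' r) r := by
      have := (hW.pow 2).add_const 1
      refine this.congr_deriv ?_
      push_cast
      ring
    have hA : HasDerivAt (fun x => ((W x) ^ 2 + 1) ^ p)
        (2 * W r * W' r * p * ((W r) ^ 2 + 1) ^ (p - 1)) r :=
      hu.rpow_const (Or.inl hu0)
    have harctan : HasDerivAt (fun x => Real.arctan (W x))
        (1 / (1 + (W r) ^ 2) * W' r) r :=
      (Real.hasDerivAt_arctan (W r)).comp r hW
    have hθ : HasDerivAt (fun x => Θ (W x))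
        (-(((n : ℝ) - 1) * (1 / (1 + (W r) ^ 2) * W' r))) r := by
      simp only [hΘ]
      exact (harctan.const_mul ((n : ℝ) - 1)).const_sub C₀
    have hg : HasDerivAt (fun x => W x * Real.cos (Θ (W x)) - Real.sin (Θ (W x)))
        (W' r * Real.cos (Θ (W r)) +
          W r * (-Real.sin (Θ (W r)) * (-(((n : ℝ) - 1) * (1 / (1 + (W r) ^ 2) * W' r)))) -
          Real.cos (Θ (W r)) * (-(((n : ℝ) - 1) * (1 / (1 + (W r) ^ 2) * W' r)))) r :=
      (hW.mul hθ.cos).sub hθ.sin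
    have hF := hA.mul hg
    have hpow := hasDerivAt_pow n r
    have hGr := hpow.mul hF
    refine hGr.congr_deriv (Eq.symm ?_)
    have hs := hsin r hr
    have hrw : ((W r) ^ 2 + 1) ^ (p - 1) = ((W r) ^ 2 + 1) ^ p / ((W r) ^ 2 + 1) :=
      Real.rpow_sub_one hu0 p
    have hnn : n - 1 + 1 = n := Nat.sub_add_cancel (by omega)
    have hrpow : (r : ℝ) ^ n = r ^ (n - 1) * r := by
      rw [← pow_succ, hnn]
    simp only [Pi.mul_apply]
    rw [hs, hrw, hrpow, hp]
    have h1 : (1 : ℝ) + (W r) ^ 2 ≠ 0 := by positivity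
    field_simp
    ring
  -- G is constant on (1, ∞)
  have hsame : ∀ r s : ℝ, 1 < r → 1 < s → r < s → G r = G s := by
    intro r s hr hs hrs
    have hc : ContinuousOn G (Set.Icc r s) := fun x hx =>
      (hGderiv x (lt_of_lt_of_le hr hx.1)).continuousAt.continuousWithinAt
    obtain ⟨x, hx, hx0⟩ := exists_hasDerivAt_eq_slope G (fun _ => (0 : ℝ)) hrs hc
      (fun x hx => hGderiv x (hr.trans hx.1))
    have h0 : G s - G r = 0 ∨ s - r = 0 := by simpa using hx0.symm
    rcases h0 with h | h
    · linarith
    · exfalso; have : s ≠ r := ne_of_gt hrs; exact this (by linarith [sub_eq_zero.mp h])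
  refine ⟨G 2, fun r hr => ?_⟩
  have hGr : G r = G 2 := by
    rcases lt_trichotomy r 2 with h | h | h
    · exact hsame r 2 hr (by norm_num) h
    · rw [h]
    · exact (hsame 2 r (by norm_num) hr h).symm
  have hr0 : (0 : ℝ) < r := by linarith
  have hrn : (r : ℝ) ^ n ≠ 0 := by positivity
  have : ((W r) ^ 2 + 1) ^ p * (W r * Real.cos (Θ (W r)) - Real.sin (Θ (W r)))
      = G 2 / r ^ n := by
    rw [← hGr, hGdef]
    field_simp
  rw [this, zpow_neg, zpow_natCast, div_eq_mul_inv]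
end
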